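/- With the setup of pairwise disjoint $(r+1)$-sets $A_1, \ldots, A_k \subseteq \mathbb{F}_q$, a degree-$(r+1)$ polynomial $g$ constant on each $A_i$ with distinct values $g_i = g(A_i)$, $\tilde{A}_i = A_i \setminus \{a_{i,r+1}\}$, and $\mathbf{a}_{i,j} = (a_{i,j}^s g^t(a_{i,j}))_{(s,t)\in[0,r-1]\times[0,k-1]}$: for any $c \in \mathbb{F}_q$, the vector $\mathbf{c} = (c^s g^t(c))_{(s,t)\in[0,r-1]\times[0,k-1]}$ satisfies $\mathbf{c} = \sum_{(i,j) \in [k]\times[r]} \frac{h_{G\setminus\{g_i\}}(g(c))}{h_{G\setminus\{g_i\}}(g_i)} \cdot \frac{h_{\tilde{A}_i\setminus\{a_{i,j}\}}(c)}{h_{\tilde{A}_i\setminus\{a_{i,j}\}}(a_{i,j})} \mathbf{a}_{i,j}$, where $G = \{g_1,\ldots,g_k\}$ and $h_S(x) = \prod_{s\in S}(x-s)$. -/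
import Mathlib

open Finset Polynomial

/-- Lagrange interpolation identity for monomials: if `m < n` and `v : Fin n → F` is injective,
then the Lagrange interpolant of `x ^ m` at the points `v j` recovers `x ^ m` everywhere. -/
lemma lag_pow_sum {F : Type*} [Field F] {n : ℕ} (v : Fin n → F) (hv : Function.Injective v)
    (m : ℕ) (hm : m < n) (x : F) :
    ∑ j : Fin n, (∏ j' ∈ Finset.univ.erase j, (x - v j')) /
        (∏ j' ∈ Finset.univ.erase j, (v j - v j')) * (v j) ^ m = x ^ m := by
  have hinj : Set.InjOn v (Finset.univ : Finset (Fin n)) := hv.injOn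
  have hdeg : (X ^ m : F[X]).degree < (Finset.univ : Finset (Fin n)).card := by
    rw [degree_X_pow, Finset.card_univ, Fintype.card_fin]
    exact_mod_cast hm
  have key := Lagrange.eq_interpolate hinj hdeg
  have := congrArg (Polynomial.eval x) key
  rw [Lagrange.interpolate_apply, Polynomial.eval_finset_sum] at this
  simp only [eval_pow, eval_X, eval_mul, eval_C] at this
  rw [this]
  refine Finset.sum_congr rfl fun j _ => ?_
  rw [mul_comm]
  congr 1
  unfold Lagrange.basis Lagrange.basisDivisor
  rw [Polynomial.eval_prod, div_eq_mul_inv, ← Finset.prod_inv_distrib, ← Finset.prod_mul_distrib]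
  refine Finset.prod_congr rfl fun j' _ => ?_
  simp [mul_comm]

/-- Two-level Lagrange interpolation: for any `c ∈ F`, the vector
`(c^s g(c)^t)` is the explicit linear combination of the vectors
`(a_{i,j}^s g(a_{i,j})^t)`, `(i,j) ∈ [k] × [r]`, with coefficients
`(h_{G∖{gᵢ}}(g(c)) / h_{G∖{gᵢ}}(gᵢ)) · (h_{Ãᵢ∖{a_{i,j}}}(c) / h_{Ãᵢ∖{a_{i,j}}}(a_{i,j}))`. -/
theorem stmt_10 (F : Type*) [Field F] [Fintype F] (k r : ℕ) (hk : 0 < k) (hr : 0 < r)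
    (a : Fin k → Fin (r + 1) → F)
    (hdist : Function.Injective fun p : Fin k × Fin (r + 1) => a p.1 p.2)
    (g : Polynomial F) (hdeg : g.natDegree = r + 1)
    (gv : Fin k → F) (hconst : ∀ i j, g.eval (a i j) = gv i)
    (hgv : Function.Injective gv) (c : F) :
    ∀ s : Fin r, ∀ t : Fin k,
      c ^ (s : ℕ) * (g.eval c) ^ (t : ℕ) =
        ∑ i : Fin k, ∑ j : Fin r,
          ((∏ i' ∈ Finset.univ.erase i, (g.eval c - gv i')) /
              (∏ i' ∈ Finset.univ.erase i, (gv i - gv i'))) *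
            ((∏ j' ∈ Finset.univ.erase j, (c - a i j'.castSucc)) /
              (∏ j' ∈ Finset.univ.erase j, (a i j.castSucc - a i j'.castSucc))) *
            ((a i j.castSucc) ^ (s : ℕ) * (g.eval (a i j.castSucc)) ^ (t : ℕ)) := by
  intro s t
  have hin : ∀ i : Fin k, Function.Injective (fun j : Fin r => a i j.castSucc) := by
    intro i x y h
    have h2 : ((i, x.castSucc) : Fin k × Fin (r + 1)) = (i, y.castSucc) := hdist h
    exact Fin.castSucc_injective r (congrArg Prod.snd h2)
  have outer := lag_pow_sum gv hgv t t.isLt (g.eval c)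
  have inner := fun i => lag_pow_sum (fun j => a i j.castSucc) (hin i) s s.isLt c
  rw [mul_comm, ← outer, Finset.sum_mul]
  refine Finset.sum_congr rfl fun i _ => ?_
  rw [mul_assoc, mul_comm ((gv i) ^ (t : ℕ)), ← inner i, Finset.sum_mul, Finset.mul_sum]
  refine Finset.sum_congr rfl fun j _ => ?_
  rw [hconst]
  ring
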